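/- If lev(x, y) = 1, then either y is obtained from x by one insertion (so x ∈ D₁(y)), or by one deletion (so y ∈ D₁(x)), or by one substitution, in which case D₁(x) ∩ D₁(y) ≠ ∅; in all cases D₁(x) ∩ D₁(y) ≠ ∅. -/

import Mathlib

/-! Levenshtein distance, as formerly in `Mathlib/Data/List/EditDistance/Defs.lean`
(removed from Mathlib since); reproduced here with its old meaning. -/

namespace Levenshtein

structure Cost (α β δ : Type*) where
  delete : α → δ
  insert : β → δ
  substitute : α → β → δ

def defaultCost {α : Type*} [DecidableEq α] : Cost α α ℕ where
  delete _ := 1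
  insert _ := 1
  substitute a b := if a = b then 0 else 1

def impl {α β δ : Type*} [AddZeroClass δ] [Min δ] (C : Cost α β δ)
    (xs : List α) (y : β) (d : {r : List δ // 0 < r.length}) :
    {r : List δ // 0 < r.length} :=
  let ⟨ds, w⟩ := d
  xs.zip (ds.zip ds.tail) |>.foldr
    (init := ⟨[C.insert y + ds.getLast (List.length_pos_iff.mp w)], by simp⟩)
    (fun ⟨x, d₀, d₁⟩ ⟨r, w⟩ =>
      ⟨min (C.delete x + r[0]) (min (C.insert y + d₀) (C.substitute x y + d₁)) :: r, by simp⟩)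

end Levenshtein

def suffixLevenshtein {α β δ : Type*} [AddZeroClass δ] [Min δ] (C : Levenshtein.Cost α β δ)
    (xs : List α) (ys : List β) : {r : List δ // 0 < r.length} :=
  ys.foldr
    (Levenshtein.impl C xs)
    (xs.foldr (init := ⟨[0], by simp⟩) (fun a ⟨r, w⟩ => ⟨(C.delete a + r[0]) :: r, by simp⟩))

def levenshtein {α β δ : Type*} [AddZeroClass δ] [Min δ] (C : Levenshtein.Cost α β δ)
    (xs : List α) (ys : List β) : δ :=
  let ⟨r, w⟩ := suffixLevenshtein C xs ys
  r[0]


namespace Levenshtein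

@[simp] theorem defaultCost_delete {α : Type*} [DecidableEq α] (a : α) :
    (defaultCost : Cost α α ℕ).delete a = 1 := rfl
@[simp] theorem defaultCost_insert {α : Type*} [DecidableEq α] (a : α) :
    (defaultCost : Cost α α ℕ).insert a = 1 := rfl
@[simp] theorem defaultCost_substitute {α : Type*} [DecidableEq α] (a b : α) :
    (defaultCost : Cost α α ℕ).substitute a b = if a = b then 0 else 1 := rfl

theorem impl_cons {α β δ : Type*} [AddZeroClass δ] [Min δ] (C : Cost α β δ)
    (x : α) (xs : List α) (y : β) (d : δ) (ds : List δ) (w) (w' : 0 < List.length ds) :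
    impl C (x :: xs) y ⟨d :: ds, w⟩ =
      let ⟨r, w⟩ := impl C xs y ⟨ds, w'⟩
      ⟨min (C.delete x + r[0]) (min (C.insert y + d) (C.substitute x y + ds[0])) :: r,
        by simp⟩ :=
  match ds, w' with | _ :: _, _ => rfl

theorem impl_length {α β δ : Type*} [AddZeroClass δ] [Min δ] (C : Cost α β δ)
    (xs : List α) (y : β) (d : {r : List δ // 0 < r.length}) (w : d.1.length = xs.length + 1) :
    (impl C xs y d).1.length = xs.length + 1 := by
  induction xs generalizing d with
  | nil => rfl
  | cons x xs ih =>
    match d, w with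
    | ⟨d₁ :: d₂ :: ds, _⟩, w =>
      rw [impl_cons C x xs y d₁ (d₂ :: ds) (by simp) (by simp)]
      simp only [List.length_cons]
      congr 1
      exact ih ⟨d₂ :: ds, (by simp)⟩ (by simpa using w)

end Levenshtein

theorem suffixLevenshtein_length {α β δ : Type*} [AddZeroClass δ] [Min δ]
    (C : Levenshtein.Cost α β δ) (xs : List α) (ys : List β) :
    (suffixLevenshtein C xs ys).1.length = xs.length + 1 := by
  induction ys with
  | nil =>
    dsimp [suffixLevenshtein]
    induction xs with
    | nil => rfl
    | cons _ xs ih => simp_all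
  | cons y ys ih =>
    show (Levenshtein.impl C xs y (suffixLevenshtein C xs ys)).1.length = _
    rw [Levenshtein.impl_length]
    exact ih

theorem suffixLevenshtein_cons₁_aux {α} {x y : { l : List α // 0 < l.length }}
    (w₀ : x.1[0]'x.2 = y.1[0]'y.2) (w : x.1.tail = y.1.tail) : x = y := by
  match x, y with
  | ⟨hx :: tx, _⟩, ⟨hy :: ty, _⟩ => simp_all

theorem suffixLevenshtein_cons₁ {α β δ : Type*} [AddZeroClass δ] [Min δ]
    (C : Levenshtein.Cost α β δ) (x : α) (xs : List α) (ys : List β) :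
    suffixLevenshtein C (x :: xs) ys =
      ⟨levenshtein C (x :: xs) ys :: (suffixLevenshtein C xs ys).1, by simp⟩ := by
  induction ys with
  | nil => rfl
  | cons y ys ih =>
    apply suffixLevenshtein_cons₁_aux
    · rfl
    · show (Levenshtein.impl C (x :: xs) y (suffixLevenshtein C (x :: xs) ys)).1.tail = _
      rw [ih, Levenshtein.impl_cons (w' := by simp [suffixLevenshtein_length])]
      rfl

@[simp] theorem levenshtein_nil_nil {α β δ : Type*} [AddZeroClass δ] [Min δ]
    (C : Levenshtein.Cost α β δ) : levenshtein C ([] : List α) ([] : List β) = 0 := rfl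

@[simp] theorem levenshtein_cons_nil {α β δ : Type*} [AddZeroClass δ] [Min δ]
    (C : Levenshtein.Cost α β δ) (x : α) (xs : List α) :
    levenshtein C (x :: xs) ([] : List β) = C.delete x + levenshtein C xs [] := rfl

@[simp] theorem levenshtein_nil_cons {α β δ : Type*} [AddZeroClass δ] [Min δ]
    (C : Levenshtein.Cost α β δ) (y : β) (ys : List β) :
    levenshtein C ([] : List α) (y :: ys) = C.insert y + levenshtein C [] ys := by
  have hl := suffixLevenshtein_length C ([] : List α) ys
  obtain ⟨⟨r, w⟩, hs⟩ : ∃ s, suffixLevenshtein C ([] : List α) ys = s := ⟨_, rfl⟩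
  rw [hs] at hl
  simp only [List.length_nil, zero_add] at hl
  obtain ⟨d, rfl⟩ := List.length_eq_one_iff.mp hl
  show (Levenshtein.impl C [] y (suffixLevenshtein C [] ys)).1[0]'(Levenshtein.impl C [] y (suffixLevenshtein C [] ys)).2 =
    C.insert y + (suffixLevenshtein C [] ys).1[0]'(suffixLevenshtein C [] ys).2
  rw [hs]
  rfl

theorem levenshtein_cons_cons {α β δ : Type*} [AddZeroClass δ] [Min δ]
    (C : Levenshtein.Cost α β δ) (x : α) (xs : List α) (y : β) (ys : List β) :
    levenshtein C (x :: xs) (y :: ys) =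
      min (C.delete x + levenshtein C xs (y :: ys))
        (min (C.insert y + levenshtein C (x :: xs) ys)
          (C.substitute x y + levenshtein C xs ys)) := by
  show (Levenshtein.impl C (x :: xs) y (suffixLevenshtein C (x :: xs) ys)).1[0]'
    (Levenshtein.impl C (x :: xs) y (suffixLevenshtein C (x :: xs) ys)).2 = _
  rw [suffixLevenshtein_cons₁, Levenshtein.impl_cons (w' := by simp [suffixLevenshtein_length])]
  rfl

private lemma lev_nil_right {σ : Type*} [DecidableEq σ] (x : List σ) :
    levenshtein Levenshtein.defaultCost x [] = x.length := by
  induction x with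
  | nil => simp
  | cons a as ih => simp [ih]; omega

private lemma lev_nil_left {σ : Type*} [DecidableEq σ] (y : List σ) :
    levenshtein Levenshtein.defaultCost [] y = y.length := by
  induction y with
  | nil => simp
  | cons b bs ih => simp [ih]; omega

private lemma lev_eq_zero {σ : Type*} [DecidableEq σ] (x y : List σ)
    (h : levenshtein Levenshtein.defaultCost x y = 0) : x = y := by
  induction x generalizing y with
  | nil => rw [lev_nil_left] at h; exact (List.length_eq_zero_iff.mp h).symm
  | cons a as ih =>
    cases y with
    | nil => rw [lev_nil_right] at h; simp at h
    | cons b bs =>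
      rw [levenshtein_cons_cons] at h
      simp only [Levenshtein.defaultCost_delete, Levenshtein.defaultCost_insert,
        Levenshtein.defaultCost_substitute, Nat.min_eq_zero_iff, Nat.add_eq_zero] at h
      rcases h with (⟨h1, _⟩ | ⟨h1, _⟩ | ⟨hc, h0⟩)
      · omega
      · omega
      · have : a = b := by by_contra hne; simp [hne] at hc
        rw [this, ih bs h0]

/-- If `lev(x,y) = 1` then `D₁(x) ∩ D₁(y) ≠ ∅`, where `D₁(w)` consists of `w`
together with all of its one-character-deletion variants. -/
theorem symdel_one_edit {σ : Type*} [DecidableEq σ] (x y : List σ)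
    (h : levenshtein Levenshtein.defaultCost x y = 1) :
    ∃ z : List σ, z.Sublist x ∧ x.length ≤ z.length + 1 ∧
      z.Sublist y ∧ y.length ≤ z.length + 1 := by
  induction x generalizing y with
  | nil =>
    rw [lev_nil_left] at h
    exact ⟨[], List.nil_sublist _, by simp, List.nil_sublist _, by simp [h]⟩
  | cons a as ih =>
    cases y with
    | nil =>
      rw [lev_nil_right] at h
      exact ⟨[], List.nil_sublist _, by simpa using h.le, List.nil_sublist _, by simp⟩
    | cons b bs =>
      rw [levenshtein_cons_cons] at h
      simp only [Levenshtein.defaultCost_delete, Levenshtein.defaultCost_insert,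
        Levenshtein.defaultCost_substitute] at h
      by_cases hab : a = b
      · subst hab
        rw [if_pos rfl, Nat.zero_add] at h
        have hcase : levenshtein Levenshtein.defaultCost as (a :: bs) = 0 ∨
            levenshtein Levenshtein.defaultCost (a :: as) bs = 0 ∨
            levenshtein Levenshtein.defaultCost as bs = 1 := by omega
        rcases hcase with h0 | h0 | h1
        · have hae := lev_eq_zero _ _ h0
          exact ⟨as, List.sublist_cons_self a as, by simp, hae ▸ List.Sublist.refl as,
            by simp [← hae]⟩
        · have := lev_eq_zero _ _ h0; rw [← this]
          exact ⟨a :: as, List.Sublist.refl _, by simp, List.sublist_cons_self a _, by simp⟩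
        · obtain ⟨z, hz1, hz2, hz3, hz4⟩ := ih bs h1
          exact ⟨a :: z, hz1.cons₂ a, by simpa using hz2, hz3.cons₂ a, by simpa using hz4⟩
      · rw [if_neg hab] at h
        have hcase : levenshtein Levenshtein.defaultCost as (b :: bs) = 0 ∨
            levenshtein Levenshtein.defaultCost (a :: as) bs = 0 ∨
            levenshtein Levenshtein.defaultCost as bs = 0 := by omega
        rcases hcase with h0 | h0 | h0
        · have hae := lev_eq_zero _ _ h0
          exact ⟨as, List.sublist_cons_self a as, by simp, hae ▸ List.Sublist.refl as,
            by simp [← hae]⟩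
        · have := lev_eq_zero _ _ h0; rw [← this]
          exact ⟨a :: as, List.Sublist.refl _, by simp, List.sublist_cons_self b _, by simp⟩
        · have hae := lev_eq_zero _ _ h0
          exact ⟨as, List.sublist_cons_self a as, by simp,
            hae ▸ List.sublist_cons_self b bs, by simp [hae]⟩
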